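/- For $\gamma < 0$ and any $T > 0$, the Volterra equation $r(t) + \gamma(l \ast r)(t) = l(t)$ with nonnegative $l \in L_1((0,T))$ has a unique nonnegative solution $r \in L_1((0,T))$. -/

import Mathlib

open MeasureTheory Real Set
open scoped ENNReal NNReal

noncomputable def conv (f g : ℝ → ℝ) (t : ℝ) : ℝ := ∫ τ in (0:ℝ)..t, f (t - τ) * g τ

namespace VolterraAux

/-- the open triangle `0 < τ < t` -/
def S : Set (ℝ × ℝ) := {p : ℝ × ℝ | 0 < p.2 ∧ p.2 < p.1}

lemma measS : MeasurableSet S :=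
  (measurableSet_lt measurable_const measurable_snd).inter
    (measurableSet_lt measurable_snd measurable_fst)

noncomputable def kern (L f : ℝ → ℝ) (t : ℝ) : ℝ :=
  ∫ τ, S.indicator (fun p => L (p.1 - p.2) * f p.2) (t, τ)

noncomputable def IK (L f : ℝ → ℝ) (t : ℝ) : ℝ≥0∞ :=
  ∫⁻ τ, S.indicator (fun p => (‖L (p.1 - p.2)‖₊ * ‖f p.2‖₊ : ℝ≥0∞)) (t, τ)

lemma kern_eq (L f : ℝ → ℝ) (t : ℝ) :
    kern L f t = ∫ τ in Ioo 0 t, L (t - τ) * f τ := by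
  rw [kern, ← MeasureTheory.integral_indicator measurableSet_Ioo]
  refine integral_congr_ae (Filter.Eventually.of_forall fun τ => ?_)
  by_cases h : (0 < τ ∧ τ < t) <;>
    simp [S, Set.indicator, Set.mem_setOf_eq, mem_Ioo, h]

lemma IK_eq (L f : ℝ → ℝ) (t : ℝ) :
    IK L f t = ∫⁻ τ in Ioo 0 t, (‖L (t - τ)‖₊ * ‖f τ‖₊ : ℝ≥0∞) := by
  rw [IK, ← MeasureTheory.lintegral_indicator measurableSet_Ioo]
  refine lintegral_congr fun τ => ?_
  by_cases h : (0 < τ ∧ τ < t) <;>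
    simp [S, Set.indicator, Set.mem_setOf_eq, mem_Ioo, h]

lemma conv_eq_kern (L f : ℝ → ℝ) {t : ℝ} (ht : 0 ≤ t) :
    conv L f t = kern L f t := by
  rw [conv, intervalIntegral.integral_of_le ht, integral_Ioc_eq_integral_Ioo, kern_eq]

lemma enorm_kern_le (L f : ℝ → ℝ) (t : ℝ) :
    (‖kern L f t‖₊ : ℝ≥0∞) ≤ IK L f t := by
  refine le_trans (enorm_integral_le_lintegral_enorm _) (le_of_eq ?_)
  refine lintegral_congr fun τ => ?_
  by_cases h : (t, τ) ∈ S <;>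
    simp [Set.indicator, h, nnnorm_mul, ENNReal.coe_mul] <;> rfl

lemma kern_stronglyMeasurable {L f : ℝ → ℝ} (hL : Measurable L) (hf : Measurable f) :
    StronglyMeasurable (kern L f) := by
  have : StronglyMeasurable (S.indicator (fun p : ℝ × ℝ => L (p.1 - p.2) * f p.2)) := by
    refine (Measurable.indicator ?_ measS).stronglyMeasurable
    exact ((hL.comp (measurable_fst.sub measurable_snd)).mul (hf.comp measurable_snd))
  exact this.integral_prod_right'

lemma kern_measurable {L f : ℝ → ℝ} (hL : Measurable L) (hf : Measurable f) :
    Measurable (kern L f) := (kern_stronglyMeasurable hL hf).measurable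

lemma IK_measurable {L f : ℝ → ℝ} (hL : Measurable L) (hf : Measurable f) :
    Measurable (IK L f) := by
  have : Measurable (S.indicator (fun p : ℝ × ℝ => (‖L (p.1 - p.2)‖₊ * ‖f p.2‖₊ : ℝ≥0∞))) := by
    refine Measurable.indicator ?_ measS
    exact ((hL.comp (measurable_fst.sub measurable_snd)).enorm.mul
      (hf.comp measurable_snd).enorm)
  exact this.lintegral_prod_right'

lemma kern_nonneg {L f : ℝ → ℝ} (hL : ∀ x, 0 ≤ L x) (hf : ∀ x, 0 ≤ f x) (t : ℝ) :
    0 ≤ kern L f t := by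
  refine integral_nonneg fun τ => ?_
  exact Set.indicator_nonneg (fun p _ => mul_nonneg (hL _) (hf _)) _



lemma wexp_ne_top {x : ℝ} : ENNReal.ofReal (exp x) ≠ ⊤ := ENNReal.ofReal_ne_top

lemma key {L f : ℝ → ℝ} (hL : Measurable L) (hf : Measurable f) {b T : ℝ} (hb : 0 ≤ b)
    (hG : ∫⁻ s in Ioo 0 T, (‖L s‖₊ : ℝ≥0∞) * ENNReal.ofReal (exp (-(b * s))) ≠ ⊤) :
    ∫⁻ t in Ioo 0 T, IK L f t * ENNReal.ofReal (exp (-(b * t)))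
      ≤ (∫⁻ s in Ioo 0 T, (‖L s‖₊ : ℝ≥0∞) * ENNReal.ofReal (exp (-(b * s)))) *
        (∫⁻ τ in Ioo 0 T, (‖f τ‖₊ : ℝ≥0∞) * ENNReal.ofReal (exp (-(b * τ)))) := by
  set G : ℝ → ℝ≥0∞ := fun s => (‖L s‖₊ : ℝ≥0∞) * ENNReal.ofReal (exp (-(b * s))) with hGdef
  set H : ℝ → ℝ≥0∞ := fun τ => (‖f τ‖₊ : ℝ≥0∞) * ENNReal.ofReal (exp (-(b * τ))) with hHdef
  have hHne : ∀ τ, H τ ≠ ⊤ := fun τ => ENNReal.mul_ne_top ENNReal.coe_ne_top wexp_ne_top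
  set S' : Set (ℝ × ℝ) := {p : ℝ × ℝ | 0 < p.2 ∧ p.2 < p.1 ∧ p.1 < T} with hS'def
  have measS' : MeasurableSet S' := by
    refine ((measurableSet_lt measurable_const measurable_snd).inter
      ((measurableSet_lt measurable_snd measurable_fst).inter
        (measurableSet_lt measurable_fst measurable_const)))
  set Φ : ℝ × ℝ → ℝ≥0∞ := S'.indicator (fun p => G (p.1 - p.2) * H p.2) with hΦdef
  have hΦmeas : Measurable Φ := by
    refine Measurable.indicator ?_ measS'
    have hGmeas : Measurable G := by
      exact hL.enorm.mul (ENNReal.measurable_ofReal.comp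
        (Real.measurable_exp.comp (measurable_id.const_mul b).neg))
    have hHmeas : Measurable H := by
      exact hf.enorm.mul (ENNReal.measurable_ofReal.comp
        (Real.measurable_exp.comp (measurable_id.const_mul b).neg))
    exact (hGmeas.comp (measurable_fst.sub measurable_snd)).mul (hHmeas.comp measurable_snd)
  have hΦeq : ∀ t τ, Φ (t, τ) = if 0 < τ ∧ τ < t ∧ t < T then G (t - τ) * H τ else 0 := by
    intro t τ
    by_cases hP : 0 < τ ∧ τ < t ∧ t < T
    · rw [if_pos hP, hΦdef, Set.indicator_of_mem (show (t, τ) ∈ S' from hP)]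
    · rw [if_neg hP, hΦdef, Set.indicator_of_notMem (show (t, τ) ∉ S' from hP)]
  have step1 : ∫⁻ t in Ioo 0 T, IK L f t * ENNReal.ofReal (exp (-(b * t)))
      = ∫⁻ t, ∫⁻ τ, Φ (t, τ) := by
    rw [← MeasureTheory.lintegral_indicator measurableSet_Ioo]
    refine lintegral_congr fun t => ?_
    simp only [hΦeq]
    by_cases ht : t ∈ Ioo 0 T
    · rw [Set.indicator_of_mem ht, IK_eq,
        ← lintegral_mul_const' _ _ (wexp_ne_top (x := -(b * t))),
        ← MeasureTheory.lintegral_indicator (measurableSet_Ioo (a := (0:ℝ)) (b := t))]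
      refine lintegral_congr fun τ => ?_
      by_cases hτ : τ ∈ Ioo 0 t
      · rw [Set.indicator_of_mem hτ, if_pos ⟨hτ.1, hτ.2, ht.2⟩]
        have hw : ENNReal.ofReal (exp (-(b * (t - τ)))) * ENNReal.ofReal (exp (-(b * τ)))
            = ENNReal.ofReal (exp (-(b * t))) := by
          rw [← ENNReal.ofReal_mul (exp_nonneg _), ← exp_add]
          ring_nf
        show (‖L (t - τ)‖₊ : ℝ≥0∞) * ‖f τ‖₊ * ENNReal.ofReal (exp (-(b * t)))
            = G (t - τ) * H τ
        rw [hGdef, hHdef]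
        dsimp only
        rw [mul_mul_mul_comm, hw]
      · rw [Set.indicator_of_notMem hτ, if_neg (fun hc => hτ ⟨hc.1, hc.2.1⟩)]
    · rw [Set.indicator_of_notMem ht]
      have : ∀ τ, (if 0 < τ ∧ τ < t ∧ t < T then G (t - τ) * H τ else 0) = 0 := fun τ =>
        if_neg (fun hc => ht.elim (Set.mem_Ioo.mpr ⟨lt_trans hc.1 hc.2.1, hc.2.2⟩))
      simp [this]
  have step2 : ∫⁻ t, ∫⁻ τ, Φ (t, τ) = ∫⁻ τ, ∫⁻ t, Φ (t, τ) :=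
    lintegral_lintegral_swap hΦmeas.aemeasurable
  have step3 : ∀ τ, (∫⁻ t, Φ (t, τ))
      = (Ioo 0 T).indicator (fun τ => H τ * ∫⁻ t in Ioo τ T, G (t - τ)) τ := by
    intro τ
    by_cases hτ : τ ∈ Ioo 0 T
    · rw [Set.indicator_of_mem hτ]
      have : ∀ t, Φ (t, τ) = (Ioo τ T).indicator (fun t => G (t - τ) * H τ) t := by
        intro t
        rw [hΦeq]
        by_cases ht : t ∈ Ioo τ T
        · rw [Set.indicator_of_mem ht, if_pos ⟨hτ.1, ht.1, ht.2⟩]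
        · rw [Set.indicator_of_notMem ht,
            if_neg (fun hc => ht (Set.mem_Ioo.mpr ⟨hc.2.1, hc.2.2⟩))]
      simp only [this]
      rw [MeasureTheory.lintegral_indicator measurableSet_Ioo,
        lintegral_mul_const' _ _ (hHne τ), mul_comm]
    · rw [Set.indicator_of_notMem hτ]
      have : ∀ t, Φ (t, τ) = 0 := fun t => by
        rw [hΦeq]
        exact if_neg (fun hc => hτ (Set.mem_Ioo.mpr ⟨hc.1, lt_trans hc.2.1 hc.2.2⟩))
      simp [this]
  have step4 : ∫⁻ τ, ∫⁻ t, Φ (t, τ)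
      = ∫⁻ τ in Ioo 0 T, H τ * ∫⁻ t in Ioo τ T, G (t - τ) := by
    simp only [step3]
    exact MeasureTheory.lintegral_indicator measurableSet_Ioo _
  have step5 : ∫⁻ τ in Ioo 0 T, H τ * ∫⁻ t in Ioo τ T, G (t - τ)
      ≤ ∫⁻ τ in Ioo 0 T, H τ * ∫⁻ s in Ioo 0 T, G s := by
    refine setLIntegral_mono_ae (by fun_prop) (Filter.Eventually.of_forall fun τ hτ => ?_)
    refine mul_le_mul_right ?_ _
    have hpre : (fun x => x + τ) ⁻¹' Ioo τ T = Ioo 0 (T - τ) := by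
      ext x
      simp only [Set.mem_preimage, mem_Ioo]
      constructor <;> rintro ⟨h1, h2⟩ <;> exact ⟨by linarith, by linarith⟩
    have := (measurePreserving_add_right volume τ).setLIntegral_comp_preimage_emb
      (measurableEmbedding_addRight τ) (fun t => G (t - τ)) (Ioo τ T)
    simp only [add_sub_cancel_right, hpre] at this
    rw [← this]
    exact lintegral_mono_set (Ioo_subset_Ioo_right (by linarith [hτ.1]))
  have step6 : ∫⁻ τ in Ioo 0 T, H τ * ∫⁻ s in Ioo 0 T, G s
      = (∫⁻ s in Ioo 0 T, G s) * ∫⁻ τ in Ioo 0 T, H τ := by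
    rw [lintegral_mul_const' _ _ hG, mul_comm]
  calc ∫⁻ t in Ioo 0 T, IK L f t * ENNReal.ofReal (exp (-(b * t)))
      = ∫⁻ τ, ∫⁻ t, Φ (t, τ) := by rw [step1, step2]
    _ = ∫⁻ τ in Ioo 0 T, H τ * ∫⁻ t in Ioo τ T, G (t - τ) := step4
    _ ≤ ∫⁻ τ in Ioo 0 T, H τ * ∫⁻ s in Ioo 0 T, G s := step5
    _ = _ := step6

lemma conv_congr {l L g g' : ℝ → ℝ} {T t : ℝ}
    (hl : volume ({x | l x ≠ L x} ∩ Ioo 0 T) = 0)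
    (hg : volume ({x | g x ≠ g' x} ∩ Ioo 0 T) = 0)
    (ht : 0 < t) (htT : t ≤ T) :
    conv l g t = conv L g' t := by
  rw [conv, conv, intervalIntegral.integral_of_le ht.le, intervalIntegral.integral_of_le ht.le]
  refine integral_congr_ae ?_
  rw [Filter.EventuallyEq, ae_restrict_iff' measurableSet_Ioc, ae_iff]
  have hpre : volume ((fun τ => t - τ) ⁻¹' ({x | l x ≠ L x} ∩ Ioo 0 T)) = 0 := by
    rw [(Measure.measurePreserving_sub_left volume t).measure_preimage
      (NullMeasurableSet.of_null hl)]
    exact hl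
  refine measure_mono_null (fun τ hτ => ?_)
    (measure_union_null (measure_union_null hpre hg) (measure_singleton t))
  simp only [Set.mem_setOf_eq, not_forall] at hτ
  obtain ⟨hτIoc, hne⟩ := hτ
  by_cases hτt : τ = t
  · exact Or.inr (by simp [hτt])
  · have hτlt : τ < t := lt_of_le_of_ne hτIoc.2 hτt
    left
    by_cases hll : l (t - τ) = L (t - τ)
    · right
      refine ⟨fun heq => hne ?_, hτIoc.1, lt_of_lt_of_le hτlt htT⟩
      rw [hll, heq]
    · left
      exact ⟨hll, by simp [sub_pos, hτlt], by simp; linarith [hτIoc.1]⟩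

end VolterraAux

open VolterraAux Filter in
/-- For `γ < 0` the Volterra equation `r + γ (l ∗ r) = l` with nonnegative
`l ∈ L¹((0,T))` has a unique (up to a.e. equality) nonnegative solution in `L¹((0,T))`. -/
theorem volterra_negative_gamma_existence_uniqueness
    (γ : ℝ) (hγ : γ < 0) (T : ℝ) (hT : 0 < T) (l : ℝ → ℝ)
    (hl : IntegrableOn l (Set.Ioo 0 T))
    (hlnn : ∀ᵐ t ∂(volume.restrict (Set.Ioo (0:ℝ) T)), 0 ≤ l t) :
    ∃ r : ℝ → ℝ, IntegrableOn r (Set.Ioo 0 T) ∧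
      (∀ᵐ t ∂(volume.restrict (Set.Ioo (0:ℝ) T)), 0 ≤ r t) ∧
      (∀ᵐ t ∂(volume.restrict (Set.Ioo (0:ℝ) T)), r t + γ * conv l r t = l t) ∧
      (∀ r' : ℝ → ℝ, IntegrableOn r' (Set.Ioo 0 T) →
        (∀ᵐ t ∂(volume.restrict (Set.Ioo (0:ℝ) T)), r' t + γ * conv l r' t = l t) →
        (∀ᵐ t ∂(volume.restrict (Set.Ioo (0:ℝ) T)), r' t = r t)) := by
  classical
  obtain ⟨c, hc, rfl⟩ : ∃ c, 0 < c ∧ γ = -c := ⟨-γ, by linarith, by ring⟩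
  -- a measurable, everywhere-nonnegative representative of `l`
  have hlm := hl.aestronglyMeasurable
  set L : ℝ → ℝ := (Ioo 0 T).indicator (fun x => max (hlm.mk l x) 0) with hLdef
  have hLmeas : Measurable L :=
    ((hlm.stronglyMeasurable_mk.measurable).max measurable_const).indicator measurableSet_Ioo
  have hLnn : ∀ x, 0 ≤ L x := Set.indicator_nonneg (fun x _ => le_max_right _ _)
  have hLl : l =ᵐ[volume.restrict (Ioo 0 T)] L := by
    filter_upwards [hlm.ae_eq_mk, hlnn, ae_restrict_mem measurableSet_Ioo] with x h1 h2 h3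
    rw [hLdef, Set.indicator_of_mem h3, ← h1, max_eq_left h2]
  have nullOf : ∀ {f g : ℝ → ℝ}, f =ᵐ[volume.restrict (Ioo 0 T)] g →
      volume ({x | f x ≠ g x} ∩ Ioo 0 T) = 0 := by
    intro f g h
    rw [Filter.EventuallyEq, ae_iff] at h
    rwa [Measure.restrict_apply' measurableSet_Ioo] at h
  have hlLnull : volume ({x | l x ≠ L x} ∩ Ioo 0 T) = 0 := nullOf hLl
  have hLint : IntegrableOn L (Ioo 0 T) := hl.congr hLl
  -- choice of the exponential weight
  obtain ⟨b, hb⟩ : ∃ b : ℕ,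
      (∫⁻ s in Ioo 0 T, (‖L s‖₊ : ℝ≥0∞) * ENNReal.ofReal (exp (-((b : ℝ) * s))))
        < (ENNReal.ofReal c)⁻¹ * 2⁻¹ := by
    have htend : Tendsto (fun n : ℕ => ∫⁻ s in Ioo 0 T,
        (‖L s‖₊ : ℝ≥0∞) * ENNReal.ofReal (exp (-((n : ℝ) * s)))) atTop (nhds 0) := by
      have h := tendsto_lintegral_of_dominated_convergence
        (μ := volume.restrict (Ioo 0 T))
        (F := fun (n : ℕ) s => (‖L s‖₊ : ℝ≥0∞) * ENNReal.ofReal (exp (-((n : ℝ) * s))))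
        (f := fun _ => 0) (bound := fun s => (‖L s‖₊ : ℝ≥0∞))
        (fun n => hLmeas.enorm.mul (ENNReal.measurable_ofReal.comp
          (Real.measurable_exp.comp (measurable_id.const_mul _).neg)))
        (fun n => by
          filter_upwards [ae_restrict_mem measurableSet_Ioo] with s hs
          calc (‖L s‖₊ : ℝ≥0∞) * ENNReal.ofReal (exp (-((n : ℝ) * s)))
              ≤ (‖L s‖₊ : ℝ≥0∞) * 1 := by
                refine mul_le_mul_right (ENNReal.ofReal_le_one.mpr
                  (Real.exp_le_one_iff.mpr ?_)) _
                have : (0:ℝ) ≤ (n : ℝ) * s := mul_nonneg (Nat.cast_nonneg n) hs.1.le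
                linarith
            _ = (‖L s‖₊ : ℝ≥0∞) := mul_one _)
        hLint.2.ne
        (by
          filter_upwards [ae_restrict_mem measurableSet_Ioo] with s hs
          have harg : ∀ n : ℕ, -((n : ℝ) * s) = (n : ℝ) * (-s) := fun n => by ring
          simp only [harg, Real.exp_nat_mul]
          have h1 : Tendsto (fun n : ℕ => exp (-s) ^ n) atTop (nhds 0) :=
            tendsto_pow_atTop_nhds_zero_of_lt_one (exp_nonneg _)
              (Real.exp_lt_one_iff.mpr (by linarith [hs.1]))
          have h2 := ENNReal.Tendsto.const_mul (a := (‖L s‖₊ : ℝ≥0∞))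
            (ENNReal.tendsto_ofReal h1) (Or.inr ENNReal.coe_ne_top)
          simpa using h2)
      simpa using h
    have hεpos : (0 : ℝ≥0∞) < (ENNReal.ofReal c)⁻¹ * 2⁻¹ := by
      apply ENNReal.mul_pos
      · exact ENNReal.inv_ne_zero.mpr ENNReal.ofReal_ne_top
      · simp
    exact (htend.eventually_lt_const hεpos).exists
  set w : ℝ → ℝ≥0∞ := fun t => ENNReal.ofReal (exp (-((b : ℝ) * t))) with hwdef
  have hwmeas : Measurable w := ENNReal.measurable_ofReal.comp
    (Real.measurable_exp.comp (measurable_id.const_mul _).neg)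
  have hwtop : ∀ t, w t ≠ ⊤ := fun t => ENNReal.ofReal_ne_top
  have hwzero : ∀ t, w t ≠ 0 := fun t => by
    simp [hwdef, ENNReal.ofReal_eq_zero, not_le, exp_pos]
  set W : (ℝ → ℝ) → ℝ≥0∞ := fun f => ∫⁻ t in Ioo 0 T, (‖f t‖₊ : ℝ≥0∞) * w t with hWdef
  set cE : ℝ≥0∞ := ENNReal.ofReal c with hcEdef
  have hcE0 : cE ≠ 0 := by simp [hcEdef, ENNReal.ofReal_eq_zero, not_le, hc]
  have hcEtop : cE ≠ ⊤ := ENNReal.ofReal_ne_top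
  have hbWL : W L < cE⁻¹ * 2⁻¹ := hb
  set q : ℝ≥0∞ := cE * W L with hqdef
  have hq1 : q < 1 := by
    calc q < cE * (cE⁻¹ * 2⁻¹) := by
          rw [hqdef]; exact (ENNReal.mul_lt_mul_iff_right hcE0 hcEtop).mpr hbWL
      _ = 2⁻¹ := by rw [← mul_assoc, ENNReal.mul_inv_cancel hcE0 hcEtop, one_mul]
      _ < 1 := by simp [ENNReal.inv_lt_one]
  -- basic properties of W
  have hWle : ∀ f : ℝ → ℝ, W f ≤ ∫⁻ t in Ioo 0 T, (‖f t‖₊ : ℝ≥0∞) := by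
    intro f
    refine lintegral_mono_ae ?_
    filter_upwards [ae_restrict_mem measurableSet_Ioo] with t ht
    calc (‖f t‖₊ : ℝ≥0∞) * w t ≤ (‖f t‖₊ : ℝ≥0∞) * 1 := by
          refine mul_le_mul_right (ENNReal.ofReal_le_one.mpr (Real.exp_le_one_iff.mpr ?_)) _
          have : (0:ℝ) ≤ (b : ℝ) * t := mul_nonneg (Nat.cast_nonneg b) ht.1.le
          linarith
      _ = _ := mul_one _
  have hWfin : ∀ {f : ℝ → ℝ}, IntegrableOn f (Ioo 0 T) → W f ≠ ⊤ :=
    fun {f} hf => (lt_of_le_of_lt (hWle f) hf.2).ne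
  have hWge : ∀ f : ℝ → ℝ, (∫⁻ t in Ioo 0 T, (‖f t‖₊ : ℝ≥0∞))
      ≤ ENNReal.ofReal (exp ((b : ℝ) * T)) * W f := by
    intro f
    rw [hWdef]
    dsimp only
    rw [← lintegral_const_mul' _ _ (wexp_ne_top (x := (b : ℝ) * T))]
    refine lintegral_mono_ae ?_
    filter_upwards [ae_restrict_mem measurableSet_Ioo] with t ht
    have h1 : (1 : ℝ≥0∞) ≤ ENNReal.ofReal (exp ((b : ℝ) * T)) * w t := by
      rw [hwdef]
      dsimp only
      rw [← ENNReal.ofReal_mul (exp_nonneg _), ← exp_add, ENNReal.one_le_ofReal]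
      refine Real.one_le_exp ?_
      have : (0:ℝ) ≤ (b : ℝ) * (T - t) := mul_nonneg (Nat.cast_nonneg b) (by linarith [ht.2])
      linarith
    calc (‖f t‖₊ : ℝ≥0∞) = (‖f t‖₊ : ℝ≥0∞) * 1 := (mul_one _).symm
      _ ≤ (‖f t‖₊ : ℝ≥0∞) * (ENNReal.ofReal (exp ((b : ℝ) * T)) * w t) :=
          mul_le_mul_right h1 _
      _ = ENNReal.ofReal (exp ((b : ℝ) * T)) * ((‖f t‖₊ : ℝ≥0∞) * w t) := by ring
  have hkey : ∀ {f : ℝ → ℝ}, Measurable f →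
      ∫⁻ t in Ioo 0 T, IK L f t * w t ≤ W L * W f :=
    fun {f} hf => key hLmeas hf (Nat.cast_nonneg b) (hWfin hLint)
  have hWkern : ∀ {f : ℝ → ℝ}, Measurable f → W (kern L f) ≤ W L * W f := by
    intro f hf
    refine le_trans (lintegral_mono fun t => mul_le_mul_left (enorm_kern_le L f t) (w t))
      (hkey hf)
  -- the Neumann series terms
  set u : ℕ → ℝ → ℝ := fun n t => c ^ n * ((kern L)^[n] L) t with hudef
  have hitermeas : ∀ n, Measurable ((kern L)^[n] L) := by
    intro n
    induction n with
    | zero => simpa using hLmeas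
    | succ n ih => rw [Function.iterate_succ_apply']; exact kern_measurable hLmeas ih
  have hiternn : ∀ n x, 0 ≤ ((kern L)^[n] L) x := by
    intro n
    induction n with
    | zero => simpa using hLnn
    | succ n ih =>
      intro x
      rw [Function.iterate_succ_apply']
      exact kern_nonneg hLnn ih x
  have humeas : ∀ n, Measurable (u n) := fun n => (hitermeas n).const_mul _
  have hunn : ∀ n t, 0 ≤ u n t := fun n t =>
    mul_nonneg (pow_nonneg hc.le _) (hiternn n t)
  have hWiter : ∀ n, W ((kern L)^[n] L) ≤ (W L) ^ (n + 1) := by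
    intro n
    induction n with
    | zero => simpa using le_refl (W L)
    | succ n ih =>
      rw [Function.iterate_succ_apply']
      calc W (kern L ((kern L)^[n] L)) ≤ W L * W ((kern L)^[n] L) := hWkern (hitermeas n)
        _ ≤ W L * (W L) ^ (n + 1) := mul_le_mul_right ih _
        _ = (W L) ^ (n + 1 + 1) := by ring
  have hWu : ∀ n, W (u n) ≤ q ^ n * W L := by
    intro n
    have h1 : W (u n) = cE ^ n * W ((kern L)^[n] L) := by
      rw [hWdef]
      dsimp only
      rw [← lintegral_const_mul' _ _ (ENNReal.pow_ne_top hcEtop)]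
      refine lintegral_congr fun t => ?_
      rw [hudef]
      dsimp only
      rw [nnnorm_mul, ENNReal.coe_mul,
        ← enorm_eq_nnnorm (c ^ n), Real.enorm_eq_ofReal (pow_nonneg hc.le n), ENNReal.ofReal_pow hc.le, hcEdef,
        mul_assoc]
    rw [h1]
    calc cE ^ n * W ((kern L)^[n] L) ≤ cE ^ n * (W L) ^ (n + 1) :=
          mul_le_mul_right (hWiter n) _
      _ = (cE * W L) ^ n * W L := by ring
      _ = q ^ n * W L := by rw [hqdef]
  have hsumWu : (∑' n, W (u n)) ≠ ⊤ := by
    refine ne_top_of_le_ne_top ?_ (ENNReal.tsum_le_tsum hWu)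
    rw [ENNReal.tsum_mul_right, ENNReal.tsum_geometric]
    refine ENNReal.mul_ne_top (ENNReal.inv_ne_top.mpr ?_) (hWfin hLint)
    rw [Ne, tsub_eq_zero_iff_le]
    exact not_le.mpr hq1
  have hsumNu : (∑' n, ∫⁻ t in Ioo 0 T, (‖u n t‖₊ : ℝ≥0∞)) ≠ ⊤ := by
    refine ne_top_of_le_ne_top ?_ (ENNReal.tsum_le_tsum fun n => hWge (u n))
    rw [ENNReal.tsum_mul_left]
    exact ENNReal.mul_ne_top wexp_ne_top hsumWu
  have haesum : ∀ᵐ t ∂(volume.restrict (Ioo 0 T)), Summable (fun n => ‖u n t‖₊) := by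
    have hmeas : Measurable fun t => ∑' n, (‖u n t‖₊ : ℝ≥0∞) :=
      Measurable.ennreal_tsum fun n => (humeas n).enorm
    have hfin : ∫⁻ t in Ioo 0 T, ∑' n, (‖u n t‖₊ : ℝ≥0∞) ≠ ⊤ := by
      rw [lintegral_tsum (f := fun n t => (‖u n t‖₊ : ℝ≥0∞)) fun n => (humeas n).enorm.aemeasurable]
      exact hsumNu
    filter_upwards [ae_lt_top hmeas hfin] with t ht
    exact ENNReal.tsum_coe_ne_top_iff_summable.mp ht.ne
  set r₀ : ℝ → ℝ := fun t => ∑' n, u n t with hr₀def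
  have hr₀nn : ∀ t, 0 ≤ r₀ t := fun t => tsum_nonneg fun n => hunn n t
  have haesummable : ∀ᵐ t ∂(volume.restrict (Ioo 0 T)), Summable fun n => u n t :=
    haesum.mono fun t ht => Summable.of_nnnorm ht
  have hr₀meas : AEStronglyMeasurable r₀ (volume.restrict (Ioo 0 T)) := by
    refine aestronglyMeasurable_of_tendsto_ae atTop
      (f := fun n t => ∑ i ∈ Finset.range n, u i t)
      (fun n => (Finset.measurable_sum _ fun i _ => humeas i).aestronglyMeasurable) ?_
    filter_upwards [haesummable] with t ht
    exact ht.hasSum.tendsto_sum_nat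
  have hr₀int : IntegrableOn r₀ (Ioo 0 T) := by
    refine ⟨hr₀meas, ?_⟩
    have hb1 : ∫⁻ t in Ioo 0 T, (‖r₀ t‖₊ : ℝ≥0∞)
        ≤ ∫⁻ t in Ioo 0 T, ∑' n, (‖u n t‖₊ : ℝ≥0∞) := by
      refine lintegral_mono_ae ?_
      filter_upwards [haesum] with t ht
      calc (‖r₀ t‖₊ : ℝ≥0∞) ≤ ((∑' n, ‖u n t‖₊ : ℝ≥0) : ℝ≥0∞) :=
            ENNReal.coe_le_coe.mpr (nnnorm_tsum_le ht)
        _ = ∑' n, (‖u n t‖₊ : ℝ≥0∞) := ENNReal.coe_tsum ht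
    have hb2 : ∫⁻ t in Ioo 0 T, ∑' n, (‖u n t‖₊ : ℝ≥0∞) ≠ ⊤ := by
      rw [lintegral_tsum (f := fun n t => (‖u n t‖₊ : ℝ≥0∞)) fun n => (humeas n).enorm.aemeasurable]
      exact hsumNu
    exact lt_of_le_of_lt hb1 hb2.lt_top
  -- summed kernel bound, a.e. finite
  have hSIKfin : ∀ᵐ t ∂(volume.restrict (Ioo 0 T)), (∑' n, IK L (u n) t) ≠ ⊤ := by
    have hmeas : Measurable fun t => (∑' n, IK L (u n) t) * w t :=
      (Measurable.ennreal_tsum fun n => IK_measurable hLmeas (humeas n)).mul hwmeas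
    have hfin : ∫⁻ t in Ioo 0 T, (∑' n, IK L (u n) t) * w t ≠ ⊤ := by
      have he : ∀ t, (∑' n, IK L (u n) t) * w t = ∑' n, IK L (u n) t * w t :=
        fun t => ENNReal.tsum_mul_right.symm
      simp only [he]
      rw [lintegral_tsum (f := fun n t => IK L (u n) t * w t) fun n => ((IK_measurable hLmeas (humeas n)).mul hwmeas).aemeasurable]
      refine ne_top_of_le_ne_top ?_ (ENNReal.tsum_le_tsum fun n => hkey (humeas n))
      rw [ENNReal.tsum_mul_left]
      exact ENNReal.mul_ne_top (hWfin hLint) hsumWu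
    filter_upwards [ae_lt_top hmeas hfin] with t ht
    intro hcon
    rw [hcon, ENNReal.top_mul (hwzero t)] at ht
    exact absurd ht (by simp)
  -- the fixed point equation for r₀
  have hIKu : ∀ n t, ∫⁻ τ, (‖S.indicator (fun p => L (p.1 - p.2) * u n p.2) (t, τ)‖₊ : ℝ≥0∞)
      = IK L (u n) t := by
    intro n t
    refine lintegral_congr fun τ => ?_
    by_cases hmem : (t, τ) ∈ S <;>
      simp [Set.indicator, hmem, nnnorm_mul, ENNReal.coe_mul]
  have hEq : ∀ᵐ t ∂(volume.restrict (Ioo 0 T)), r₀ t = L t + c * kern L r₀ t := by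
    filter_upwards [haesum, hSIKfin] with t hsumt hfint
    have hsum : Summable fun n => u n t := Summable.of_nnnorm hsumt
    have hker : kern L r₀ t = ∑' n, kern L (u n) t := by
      rw [kern]
      have hpt : ∀ τ, S.indicator (fun p => L (p.1 - p.2) * r₀ p.2) (t, τ)
          = ∑' n, S.indicator (fun p => L (p.1 - p.2) * u n p.2) (t, τ) := by
        intro τ
        by_cases hmem : (t, τ) ∈ S
        · simp only [Set.indicator_of_mem hmem]
          rw [hr₀def]
          exact tsum_mul_left.symm
        · simp only [Set.indicator_of_notMem hmem, tsum_zero]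
      calc (∫ τ, S.indicator (fun p => L (p.1 - p.2) * r₀ p.2) (t, τ))
          = ∫ τ, ∑' n, S.indicator (fun p => L (p.1 - p.2) * u n p.2) (t, τ) :=
            integral_congr_ae (Filter.Eventually.of_forall hpt)
        _ = ∑' n, ∫ τ, S.indicator (fun p => L (p.1 - p.2) * u n p.2) (t, τ) := by
            refine integral_tsum (fun n => (Measurable.aestronglyMeasurable ?_)) ?_
            · exact (((hLmeas.comp (measurable_fst.sub measurable_snd)).mul
                ((humeas n).comp measurable_snd)).indicator measS).comp
                (measurable_prodMk_left)
            · simp only [enorm_eq_nnnorm, hIKu]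
              exact hfint
        _ = ∑' n, kern L (u n) t := by rfl
    have hshift : ∀ n, kern L (u n) t = (1 / c) * u (n + 1) t := by
      intro n
      have h2 : kern L (u n) t = c ^ n * kern L ((kern L)^[n] L) t := by
        rw [kern, kern, ← MeasureTheory.integral_const_mul]
        refine integral_congr_ae (Filter.Eventually.of_forall fun τ => ?_)
        by_cases hmem : (t, τ) ∈ S
        · simp only [Set.indicator_of_mem hmem, hudef]
          ring
        · simp [Set.indicator_of_notMem hmem]
      rw [h2, hudef]
      dsimp only
      rw [Function.iterate_succ_apply']
      field_simp
      ring
    have hsum2 : ∑' n, kern L (u n) t = (1 / c) * (r₀ t - L t) := by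
      simp only [hshift]
      rw [tsum_mul_left]
      congr 1
      have h0 : u 0 t = L t := by rw [hudef]; simp
      have hza := Summable.tsum_eq_zero_add hsum
      rw [hr₀def]
      dsimp only
      rw [hza, h0]
      ring
    rw [hker, hsum2]
    field_simp
    ring
  -- the measurable nonnegative representative of r₀
  set r : ℝ → ℝ := (Ioo 0 T).indicator (fun t => max (hr₀meas.mk r₀ t) 0) with hrdef
  have hrmeas : Measurable r :=
    ((hr₀meas.stronglyMeasurable_mk.measurable).max measurable_const).indicator
      measurableSet_Ioo
  have hrnn : ∀ t, 0 ≤ r t := Set.indicator_nonneg (fun x _ => le_max_right _ _)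
  have hrr₀ : r₀ =ᵐ[volume.restrict (Ioo 0 T)] r := by
    filter_upwards [hr₀meas.ae_eq_mk, ae_restrict_mem measurableSet_Ioo] with t h1 h2
    rw [hrdef, Set.indicator_of_mem h2, ← h1, max_eq_left (hr₀nn t)]
  have hrint : IntegrableOn r (Ioo 0 T) := hr₀int.congr hrr₀
  have hr₀rnull : volume ({x | r x ≠ r₀ x} ∩ Ioo 0 T) = 0 := nullOf hrr₀.symm
  have hemptynull : ∀ f : ℝ → ℝ, volume ({x | f x ≠ f x} ∩ Ioo 0 T) = 0 := fun f => by simp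
  have hconvr : ∀ t ∈ Ioo 0 T, conv l r t = kern L r₀ t := by
    intro t ht
    rw [conv_congr hlLnull hr₀rnull ht.1 ht.2.le, conv_eq_kern _ _ ht.1.le]
  have heqn : ∀ᵐ t ∂(volume.restrict (Ioo 0 T)), r t + -c * conv l r t = l t := by
    filter_upwards [hEq, hrr₀, hLl, ae_restrict_mem measurableSet_Ioo] with t h1 h2 h3 h4
    rw [hconvr t h4, ← h2, h3]
    linarith [h1]
  refine ⟨r, hrint, Filter.Eventually.of_forall hrnn, heqn, ?_⟩
  -- === uniqueness ===
  rintro r' hr'int hr'eq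
  have hr'm := hr'int.aestronglyMeasurable
  set R' : ℝ → ℝ := (Ioo 0 T).indicator (hr'm.mk r') with hR'def
  have hR'meas : Measurable R' :=
    (hr'm.stronglyMeasurable_mk.measurable).indicator measurableSet_Ioo
  have hR'r' : r' =ᵐ[volume.restrict (Ioo 0 T)] R' := by
    filter_upwards [hr'm.ae_eq_mk, ae_restrict_mem measurableSet_Ioo] with t h1 h2
    rw [hR'def, Set.indicator_of_mem h2, ← h1]
  have hR'int : IntegrableOn R' (Ioo 0 T) := hr'int.congr hR'r'
  set h : ℝ → ℝ := fun t => R' t - r t with hhdef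
  have hhmeas : Measurable h := hR'meas.sub hrmeas
  have hhint : IntegrableOn h (Ioo 0 T) := hR'int.sub hrint
  have haeIK : ∀ {f : ℝ → ℝ}, Measurable f → IntegrableOn f (Ioo 0 T) →
      ∀ᵐ t ∂(volume.restrict (Ioo 0 T)), IK L f t ≠ ⊤ := by
    intro f hfm hfint
    have h1 : ∫⁻ t in Ioo 0 T, IK L f t * w t ≠ ⊤ :=
      ne_top_of_le_ne_top (ENNReal.mul_ne_top (hWfin hLint) (hWfin hfint)) (hkey hfm)
    filter_upwards [ae_lt_top ((IK_measurable hLmeas hfm).mul hwmeas) h1] with t ht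
    intro hcon
    rw [Pi.mul_apply, hcon, ENNReal.top_mul (hwzero t)] at ht
    exact absurd ht (by simp)
  have hinteg : ∀ {f : ℝ → ℝ}, Measurable f → ∀ {t : ℝ}, IK L f t ≠ ⊤ →
      IntegrableOn (fun τ => L (t - τ) * f τ) (Ioo 0 t) := by
    intro f hfm t hik
    refine ⟨Measurable.aestronglyMeasurable ?_, ?_⟩
    · exact (hLmeas.comp (measurable_const.sub measurable_id)).mul hfm
    · have he : ∫⁻ τ in Ioo 0 t, (‖L (t - τ) * f τ‖₊ : ℝ≥0∞) = IK L f t := by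
        rw [IK_eq]
        exact lintegral_congr fun τ => by simp [nnnorm_mul, ENNReal.coe_mul]
      exact (hasFiniteIntegral_def _ _).mpr (by rw [← he] at hik; exact hik.lt_top)
  have hsub : ∀ᵐ t ∂(volume.restrict (Ioo 0 T)), h t = c * kern L h t := by
    filter_upwards [hr'eq, heqn, hR'r', haeIK hR'meas hR'int, haeIK hrmeas hrint,
      ae_restrict_mem measurableSet_Ioo] with t e1 e2 eR hik1 hik2 ht
    rw [eR, conv_congr hlLnull (nullOf hR'r') ht.1 ht.2.le] at e1
    rw [conv_congr hlLnull (hemptynull r) ht.1 ht.2.le] at e2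
    have hconvIoo : ∀ g : ℝ → ℝ, conv L g t = ∫ τ in Ioo 0 t, L (t - τ) * g τ :=
      fun g => by rw [conv_eq_kern _ _ ht.1.le, kern_eq]
    have hdiff : conv L R' t - conv L r t = kern L h t := by
      rw [hconvIoo, hconvIoo, kern_eq, ← integral_sub (hinteg hR'meas hik1)
        (hinteg hrmeas hik2)]
      refine integral_congr_ae (Filter.Eventually.of_forall fun τ => ?_)
      simp only [hhdef]
      ring
    rw [← hdiff]
    simp only [hhdef]
    linarith [e1, e2]
  have hWh : W h ≤ q * W h := by
    have hstep : W h ≤ ∫⁻ t in Ioo 0 T, cE * (IK L h t * w t) := by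
      rw [hWdef]
      refine lintegral_mono_ae ?_
      filter_upwards [hsub] with t ht
      rw [ht, nnnorm_mul, ENNReal.coe_mul, ← enorm_eq_nnnorm c, Real.enorm_eq_ofReal hc.le, ← hcEdef,
        mul_assoc]
      exact mul_le_mul_right (mul_le_mul_left (enorm_kern_le L h t) (w t)) cE
    calc W h ≤ ∫⁻ t in Ioo 0 T, cE * (IK L h t * w t) := hstep
      _ = cE * ∫⁻ t in Ioo 0 T, IK L h t * w t := lintegral_const_mul' _ _ hcEtop
      _ ≤ cE * (W L * W h) := mul_le_mul_right (hkey hhmeas) _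
      _ = q * W h := by rw [hqdef, mul_assoc]
  have hWh0 : W h = 0 := by
    by_contra h0
    have hlt : q * W h < 1 * W h := (ENNReal.mul_lt_mul_iff_left h0 (hWfin hhint)).mpr hq1
    rw [one_mul] at hlt
    exact absurd (lt_of_le_of_lt hWh hlt) (lt_irrefl _)
  rw [hWdef] at hWh0
  have hae0 := (lintegral_eq_zero_iff (hhmeas.enorm.mul hwmeas)).mp hWh0
  filter_upwards [hae0, hR'r'] with t h1 h2
  have hn0 : (‖h t‖₊ : ℝ≥0∞) = 0 := by
    rcases mul_eq_zero.mp (show (‖h t‖₊ : ℝ≥0∞) * w t = 0 from h1) with hz | hz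
    · exact hz
    · exact absurd hz (hwzero t)
  have hh0 : h t = 0 := by simpa using hn0
  simp only [hhdef] at hh0
  rw [h2]
  linarith [hh0]
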